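/- Let $(A, \prec_{\alpha,\beta}, \succ_{\alpha,\beta})_{\alpha,\beta\in\Omega}$ be an $\Omega$-dendriform algebra and let $p_\alpha, q_\alpha: A\to A$ be two commuting families of $\Omega$-dendriform algebra morphisms. Define $x\prec'_{\alpha,\beta}y := p_\alpha(x)\prec_{\alpha,\beta}q_\beta(y)$ and $x\succ'_{\alpha,\beta}y := p_\alpha(x)\succ_{\alpha,\beta}q_\beta(y)$. Then $(A, \prec'_{\alpha,\beta}, \succ'_{\alpha,\beta}, p_\alpha, q_\alpha)_{\alpha,\beta\in\Omega}$ is a BiHom-$\Omega$-dendriform algebra. -/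
import Mathlib


/-- Yau twist of an Ω-dendriform algebra gives a BiHom-Ω-dendriform algebra. -/
theorem stmt_3
    {K : Type*} [Field K] {Ω : Type*} [Semigroup Ω]
    {A : Type*} [AddCommGroup A] [Module K A]
    (prec succ : Ω → Ω → A →ₗ[K] A →ₗ[K] A)
    (p q : Ω → A →ₗ[K] A)
    -- Ω-dendriform axioms
    (hden1 : ∀ (α β γ : Ω) (x y z : A),
      prec (α * β) γ (prec α β x y) z = prec α (β * γ) x (prec β γ y z + succ β γ y z))
    (hden2 : ∀ (α β γ : Ω) (x y z : A),
      prec (α * β) γ (succ α β x y) z = succ α (β * γ) x (prec β γ y z))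
    (hden3 : ∀ (α β γ : Ω) (x y z : A),
      succ (α * β) γ (prec α β x y + succ α β x y) z = succ α (β * γ) x (succ β γ y z))
    -- p, q are Ω-dendriform algebra morphisms
    (hpprec : ∀ (α β : Ω) (x y : A), p (α * β) (prec α β x y) = prec α β (p α x) (p β y))
    (hpsucc : ∀ (α β : Ω) (x y : A), p (α * β) (succ α β x y) = succ α β (p α x) (p β y))
    (hqprec : ∀ (α β : Ω) (x y : A), q (α * β) (prec α β x y) = prec α β (q α x) (q β y))
    (hqsucc : ∀ (α β : Ω) (x y : A), q (α * β) (succ α β x y) = succ α β (q α x) (q β y))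
    -- the families commute
    (hpq : ∀ (α : Ω) (x : A), p α (q α x) = q α (p α x))
    -- the twisted operations
    (prec' succ' : Ω → Ω → A → A → A)
    (hprec' : ∀ (α β : Ω) (x y : A), prec' α β x y = prec α β (p α x) (q β y))
    (hsucc' : ∀ (α β : Ω) (x y : A), succ' α β x y = succ α β (p α x) (q β y)) :
    -- (A, prec', succ', p, q) is a BiHom-Ω-dendriform algebra
    (∀ (α β : Ω) (x y : A), p (α * β) (prec' α β x y) = prec' α β (p α x) (p β y)) ∧
    (∀ (α β : Ω) (x y : A), p (α * β) (succ' α β x y) = succ' α β (p α x) (p β y)) ∧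
    (∀ (α β : Ω) (x y : A), q (α * β) (prec' α β x y) = prec' α β (q α x) (q β y)) ∧
    (∀ (α β : Ω) (x y : A), q (α * β) (succ' α β x y) = succ' α β (q α x) (q β y)) ∧
    (∀ (α β γ : Ω) (x y z : A),
      prec' (α * β) γ (prec' α β x y) (q γ z)
        = prec' α (β * γ) (p α x) (prec' β γ y z + succ' β γ y z)) ∧
    (∀ (α β γ : Ω) (x y z : A),
      prec' (α * β) γ (succ' α β x y) (q γ z) = succ' α (β * γ) (p α x) (prec' β γ y z)) ∧
    (∀ (α β γ : Ω) (x y z : A),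
      succ' α (β * γ) (p α x) (succ' β γ y z)
        = succ' (α * β) γ (prec' α β x y + succ' α β x y) (q γ z)) := by
  refine ⟨?_, ?_, ?_, ?_, ?_, ?_, ?_⟩ <;> intros <;>
    simp only [hprec', hsucc', hpprec, hpsucc, hqprec, hqsucc, map_add, hpq,
      hden1, hden2, hden3] <;> rw [← hden3] <;>
    simp only [map_add, LinearMap.add_apply]
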